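/- Let L be a finite lattice with structure matrix A defined by A(i,j) = 1 if ℓ_i ≤ ℓ_j and 0 otherwise, and let A^c be its entrywise complement. Then any strict chain B < ℓ_1 < ℓ_2 < ··· < ℓ_k in L (where B is the bottom element) gives a set of rows {ℓ_1, …, ℓ_k} of A^c that are independent over the superboolean semiring; a witness is given by the columns indexed by {B, ℓ_1, …, ℓ_{k-1}}. -/

import Mathlib

open scoped Classical

/-- The superboolean semiring `SB = {0, 1, 1^ν}`. -/
def SB := Fin 3

instance : DecidableEq SB := inferInstanceAs (DecidableEq (Fin 3))
instance : Fintype SB := inferInstanceAs (Fintype (Fin 3))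

def SB.zero : SB := (0 : Fin 3)
def SB.one : SB := (1 : Fin 3)
/-- The ghost element `1^ν`. -/
def SB.nu : SB := (2 : Fin 3)

def SB.val (a : SB) : ℕ := Fin.val a

instance : Zero SB := ⟨SB.zero⟩
instance : One SB := ⟨SB.one⟩

def SB.add (a b : SB) : SB := (⟨min (a.val + b.val) 2, by omega⟩ : Fin 3)
def SB.mul (a b : SB) : SB := (⟨min (a.val * b.val) 2, by omega⟩ : Fin 3)

instance : Add SB := ⟨SB.add⟩
instance : Mul SB := ⟨SB.mul⟩

instance : AddCommMonoid SB where
  add := (· + ·)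
  add_assoc := by decide
  zero_add := by decide
  add_zero := by decide
  add_comm := by decide
  nsmul := nsmulRec

instance : CommMonoid SB where
  mul := (· * ·)
  mul_assoc := by decide
  one_mul := by decide
  mul_one := by decide
  mul_comm := by decide
  npow := npowRec

/-- The permanent of a square superboolean matrix. -/
def sbPer {n : ℕ} (A : Matrix (Fin n) (Fin n) SB) : SB :=
  ∑ π : Equiv.Perm (Fin n), ∏ i, A (π i) i

/-- A square superboolean matrix is nonsingular when its permanent is `1`. -/
def Nonsingular {n : ℕ} (A : Matrix (Fin n) (Fin n) SB) : Prop := sbPer A = SB.one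

/-- Membership in the ghost ideal `{0, 1^ν}`. -/
def SB.IsGhost (a : SB) : Prop := a = SB.zero ∨ a = SB.nu

/-- A family of superboolean vectors is dependent if some nontrivial boolean
combination of them lies entirely in the ghost ideal. -/
def SBDep {κ ι : Type*} [Fintype κ] (v : κ → ι → SB) : Prop :=
  ∃ α : κ → SB, (∀ k, α k = SB.zero ∨ α k = SB.one) ∧ (∃ k, α k ≠ SB.zero) ∧
    ∀ j : ι, SB.IsGhost (∑ k, α k * v k j)

/-- Independence of a family of superboolean vectors. -/
def SBIndep {κ ι : Type*} [Fintype κ] (v : κ → ι → SB) : Prop := ¬ SBDep v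

/-- A matrix is boolean if none of its entries is the ghost `1^ν`. -/
def IsBooleanMat {ι κ : Type*} (A : Matrix ι κ SB) : Prop := ∀ i j, A i j ≠ SB.nu
/-- The complemented structure matrix of a finite (pre)ordered set `L`:
entry `(x, y)` is `1` iff `x ≰ y`, and `0` iff `x ≤ y`. -/
noncomputable def Ac (L : Type*) [Preorder L] : Matrix L L SB :=
  fun x y => if x ≤ y then SB.zero else SB.one


instance : CommMonoidWithZero SB :=
  { (inferInstance : CommMonoid SB), (inferInstance : Zero SB) with
    zero_mul := by decide
    mul_zero := by decide }

lemma Ac_entry {L : Type*} [Lattice L] [OrderBot L] {k : ℕ} (ℓ : Fin k → L)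
    (hmono : StrictMono ℓ) (hbot : ∀ i, ⊥ < ℓ i) (i j : Fin k) :
    Ac L (ℓ i) (if h : (j : ℕ) = 0 then ⊥ else ℓ ⟨(j : ℕ) - 1, Nat.lt_of_le_of_lt (Nat.sub_le _ _) (And.left ⟨j.isLt, hbot i⟩)⟩) =
      if (i : ℕ) < (j : ℕ) then SB.zero else SB.one := by
  unfold Ac
  by_cases h : (j : ℕ) = 0
  · rw [dif_pos h]
    have : ¬ (ℓ i ≤ ⊥) := (hbot i).not_ge
    simp [this, h]
  · rw [dif_neg h]
    have : (ℓ i ≤ ℓ ⟨(j : ℕ) - 1, Nat.lt_of_le_of_lt (Nat.sub_le _ _) (And.left ⟨j.isLt, hbot i⟩)⟩) ↔ ((i : ℕ) < (j : ℕ)) := by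
      rw [hmono.le_iff_le, Fin.le_def]
      simp only [Fin.val_mk]
      omega
    simp only [this]

lemma perm_eq_one {k : ℕ} (π : Equiv.Perm (Fin k)) (h : ∀ i : Fin k, i.val ≤ (π i).val) :
    π = 1 := by
  by_contra hne
  obtain ⟨i, hi⟩ : ∃ i, π i ≠ i := by
    by_contra hall
    push_neg at hall
    exact hne (Equiv.ext hall)
  have hlt : (i : ℕ) < (π i : ℕ) := lt_of_le_of_ne (h i) (fun e => hi (Fin.ext e.symm))
  have hsum : ∑ j : Fin k, (j : ℕ) < ∑ j : Fin k, ((π j : Fin k) : ℕ) :=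
    Finset.sum_lt_sum (fun j _ => h j) ⟨i, Finset.mem_univ i, hlt⟩
  have : ∑ j : Fin k, ((π j : Fin k) : ℕ) = ∑ j : Fin k, (j : ℕ) :=
    Equiv.sum_comp π (fun j => (j : ℕ))
  omega

/-- A strict chain `⊥ < ℓ 0 < ℓ 1 < ⋯` in a finite lattice gives independent rows of
the complemented structure matrix, with witness columns `⊥, ℓ 0, …, ℓ (k-2)`. -/
theorem chain_rows_indep {L : Type*} [Fintype L] [Lattice L] [OrderBot L]
    {k : ℕ} (ℓ : Fin k → L) (hmono : StrictMono ℓ) (hbot : ∀ i, ⊥ < ℓ i) :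
    SBIndep (fun i (y : L) => Ac L (ℓ i) y) ∧
    Nonsingular (fun i j : Fin k =>
      Ac L (ℓ i) (if h : (j : ℕ) = 0 then ⊥ else ℓ ⟨(j : ℕ) - 1, by have := j.isLt; omega⟩)) := by
  constructor
  · rintro ⟨α, hbool, ⟨k0, hk0⟩, hghost⟩
    set S : Finset (Fin k) := Finset.univ.filter (fun m => α m ≠ SB.zero) with hS
    have hSne : S.Nonempty := ⟨k0, by simp [hS, hk0]⟩
    set m : Fin k := S.max' hSne with hm
    have hmS : m ∈ S := S.max'_mem hSne
    have hαm : α m = SB.one := by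
      rcases hbool m with h | h
      · exact absurd h (by simpa [hS] using hmS)
      · exact h
    have hmax : ∀ b : Fin k, α b ≠ SB.zero → b ≤ m :=
      fun b hb => S.le_max' b (by simp [hS, hb])
    set y : L := if h : (m : ℕ) = 0 then ⊥ else ℓ ⟨(m : ℕ) - 1, by have := m.isLt; omega⟩ with hy
    have hsum : (∑ b : Fin k, α b * Ac L (ℓ b) y) = SB.one := by
      rw [Finset.sum_eq_single_of_mem m (Finset.mem_univ m)]
      · rw [hy, Ac_entry ℓ hmono hbot m m]
        simp [hαm]
        decide
      · intro b _ hbne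
        rcases lt_or_gt_of_ne (fun e : (b : ℕ) = (m : ℕ) => hbne (Fin.ext e)) with h | h
        · rw [hy, Ac_entry ℓ hmono hbot b m, if_pos h]
          show α b * SB.zero = SB.zero
          exact mul_zero _
        · have : α b = SB.zero := by
            by_contra hb
            exact absurd (hmax b hb) (not_le.mpr (by exact Fin.lt_def.mpr h))
          rw [this]
          exact zero_mul _
    have := hghost y
    rw [hsum] at this
    rcases this with h | h
    · exact absurd h (by decide)
    · exact absurd h (by decide)
  · show sbPer _ = SB.one
    have hM : (fun i j : Fin k =>
        Ac L (ℓ i) (if h : (j : ℕ) = 0 then ⊥ else ℓ ⟨(j : ℕ) - 1, by have := j.isLt; omega⟩)) =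
        fun i j : Fin k => if (i : ℕ) < (j : ℕ) then SB.zero else SB.one :=
      funext fun i => funext fun j => Ac_entry ℓ hmono hbot i j
    rw [hM]
    unfold sbPer
    rw [Finset.sum_eq_single_of_mem (1 : Equiv.Perm (Fin k)) (Finset.mem_univ _)]
    · have : ∀ i : Fin k,
          (if (((1 : Equiv.Perm (Fin k)) i : Fin k) : ℕ) < (i : ℕ) then SB.zero else SB.one)
          = SB.one := by
        intro i; simp
      calc (∏ i : Fin k, (fun i j : Fin k => if (i : ℕ) < (j : ℕ) then SB.zero else SB.one) ((1 : Equiv.Perm (Fin k)) i) i)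
          = ∏ _i : Fin k, SB.one := Finset.prod_congr rfl (fun i _ => this i)
        _ = SB.one := by
            have : (SB.one : SB) = (1 : SB) := rfl
            rw [this, Finset.prod_const_one]
    · intro π _ hπ
      obtain ⟨i, hi⟩ : ∃ i : Fin k, ((π i : Fin k) : ℕ) < (i : ℕ) := by
        by_contra hall
        push_neg at hall
        exact hπ (perm_eq_one π (fun i => hall i))
      refine Finset.prod_eq_zero (Finset.mem_univ i) ?_
      show (if ((π i).val : ℕ) < i.val then SB.zero else SB.one) = 0
      rw [if_pos hi]
      rfl
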